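/- Let d, l ≥ 1, m > 2 and L ∈ ℝ. Let f : ℝ^d → ℝ^d be Borel measurable and odd, and f_σ : ℝ^d → ℝ^{d×l} Borel measurable with f_σ(0) = 0, such that for all x, x' ∈ ℝ^d: ⟨x − x', f(x) − f(x')⟩ + 2(m−1)|f_σ(x) − f_σ(x')|² ≤ L|x − x'|². Let μ be a Borel probability measure on ℝ^d with finite second moment such that ∫∫ (|x||f(x−y)| + |f_σ(x−y)|²) μ(dy)μ(dx) < ∞. Then (with the convolutions (f∗μ)(x) = ∫f(x−y)μ(dy) and (f_σ∗μ)(x) = ∫f_σ(x−y)μ(dy), defined for μ-almost every x): ∫ ( ⟨x, (f∗μ)(x)⟩ + (m−1)|(f_σ∗μ)(x)|² ) μ(dx) ≤ L·( ∫|x|² μ(dx) − |∫ x μ(dx)|² ), i.e., the left-hand side is bounded by L times the variance of μ. -/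

import Mathlib

open scoped RealInnerProductSpace BigOperators
open MeasureTheory

lemma sq_integral_le_aux {α : Type*} [MeasurableSpace α] {μ : Measure α} [IsProbabilityMeasure μ]
    {g : α → ℝ} (hg : Integrable g μ) (hg2 : Integrable (fun a => g a ^ 2) μ) :
    (∫ a, g a ∂μ) ^ 2 ≤ ∫ a, g a ^ 2 ∂μ := by
  set c := ∫ a, g a ∂μ with hc
  have h0 : 0 ≤ ∫ a, (g a - c) ^ 2 ∂μ := integral_nonneg fun a => sq_nonneg _
  have h1 : Integrable (fun a => g a ^ 2 - 2 * c * g a) μ := hg2.sub (hg.const_mul (2 * c))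
  have heq : ∫ a, (g a - c) ^ 2 ∂μ = (∫ a, g a ^ 2 ∂μ) - c ^ 2 := by
    have hptw : ∀ a, (g a - c) ^ 2 = (g a ^ 2 - 2 * c * g a) + c ^ 2 := fun a => by ring
    rw [integral_congr_ae (Filter.Eventually.of_forall hptw),
      integral_add h1 (integrable_const _), integral_sub hg2 (hg.const_mul (2 * c)),
      integral_const_mul, integral_const]
    simp only [measure_univ, probReal_univ, ENNReal.toReal_one, smul_eq_mul, one_mul, ← hc]
    ring
  rw [heq] at h0
  linarith

set_option maxHeartbeats 1000000 in
/-- Lemma: the convolved drift/diffusion pair after integration is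
bounded by the variance. Matrices `ℝ^{d×l}` with the Frobenius norm are modelled by
`EuclideanSpace ℝ (Fin d × Fin l)`. -/
theorem convolved_pair_bounded_by_variance
    (d l : ℕ) (hd : 1 ≤ d) (hl : 1 ≤ l) (m L : ℝ) (hm : 2 < m)
    (f : EuclideanSpace ℝ (Fin d) → EuclideanSpace ℝ (Fin d))
    (hfm : Measurable f) (hodd : ∀ x, f (-x) = - f x)
    (fσ : EuclideanSpace ℝ (Fin d) → EuclideanSpace ℝ (Fin d × Fin l))
    (hfσm : Measurable fσ) (hfσ0 : fσ 0 = 0)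
    (hmono : ∀ x x' : EuclideanSpace ℝ (Fin d),
      ⟪x - x', f x - f x'⟫ + 2 * (m - 1) * ‖fσ x - fσ x'‖ ^ 2 ≤ L * ‖x - x'‖ ^ 2)
    (μ : Measure (EuclideanSpace ℝ (Fin d))) [IsProbabilityMeasure μ]
    (hμ2 : Integrable (fun x => ‖x‖ ^ 2) μ)
    (hint : Integrable
      (fun q : EuclideanSpace ℝ (Fin d) × EuclideanSpace ℝ (Fin d) =>
        ‖q.1‖ * ‖f (q.1 - q.2)‖ + ‖fσ (q.1 - q.2)‖ ^ 2) (μ.prod μ)) :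
    ∫ x, (⟪x, ∫ y, f (x - y) ∂μ⟫ + (m - 1) * ‖∫ y, fσ (x - y) ∂μ‖ ^ 2) ∂μ
      ≤ L * ((∫ x, ‖x‖ ^ 2 ∂μ) - ‖∫ x, x ∂μ‖ ^ 2) := by
  set ν := μ.prod μ with hν
  let E := EuclideanSpace ℝ (Fin d)
  have hm1 : (0:ℝ) < m - 1 := by linarith
  -- f 0 = 0
  have hf0 : f 0 = 0 := by
    have h := hodd 0
    rw [neg_zero] at h
    have h2 : f 0 + f 0 = 0 := by nth_rewrite 2 [h]; simp
    have h3 : (2 : ℝ) • f 0 = 0 := by rw [two_smul]; exact h2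
    simpa using (smul_eq_zero.mp h3).resolve_left (by norm_num)
  -- measurability
  have hmsub : Measurable (fun q : E × E => q.1 - q.2) := measurable_fst.sub measurable_snd
  have hmf : Measurable (fun q : E × E => f (q.1 - q.2)) := hfm.comp hmsub
  have hmfσ : Measurable (fun q : E × E => fσ (q.1 - q.2)) := hfσm.comp hmsub
  have hmF : Measurable (fun q : E × E => ⟪q.1, f (q.1 - q.2)⟫) :=
    measurable_fst.inner hmf
  have hmG : Measurable (fun q : E × E => ‖fσ (q.1 - q.2)‖ ^ 2) := (hmfσ.norm.pow_const 2)
  -- nonnegativity of hint integrand terms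
  have hterm : ∀ q : E × E, 0 ≤ ‖q.1‖ * ‖f (q.1 - q.2)‖ :=
    fun q => mul_nonneg (norm_nonneg _) (norm_nonneg _)
  -- integrability of pieces on the product
  have hintFn : Integrable (fun q : E × E => ‖q.1‖ * ‖f (q.1 - q.2)‖) ν := by
    refine hint.mono' (measurable_fst.norm.mul hmf.norm).aestronglyMeasurable ?_
    filter_upwards with q
    rw [Real.norm_of_nonneg (hterm q)]
    nlinarith [sq_nonneg ‖fσ (q.1 - q.2)‖]
  have hintF : Integrable (fun q : E × E => ⟪q.1, f (q.1 - q.2)⟫) ν := by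
    refine hintFn.mono' hmF.aestronglyMeasurable ?_
    filter_upwards with q
    exact (abs_real_inner_le_norm _ _)
  have hintG : Integrable (fun q : E × E => ‖fσ (q.1 - q.2)‖ ^ 2) ν := by
    refine hint.mono' hmG.aestronglyMeasurable ?_
    filter_upwards with q
    rw [Real.norm_of_nonneg (sq_nonneg _)]
    nlinarith [hterm q]
  -- swap: the second inner-product piece
  have hswapeq : ((fun q : E × E => ⟪q.1, f (q.1 - q.2)⟫) ∘ Prod.swap)
      = fun q : E × E => -⟪q.2, f (q.1 - q.2)⟫ := by
    funext q
    have h1 : q.2 - q.1 = -(q.1 - q.2) := by abel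
    simp only [Function.comp_apply, Prod.fst_swap, Prod.snd_swap, h1, hodd, inner_neg_right]
  have hintF2 : Integrable (fun q : E × E => ⟪q.2, f (q.1 - q.2)⟫) ν := by
    have h := hintF.swap
    rw [hswapeq] at h
    exact integrable_neg_iff.mp h
  have hA2 : (∫ q, ⟪q.2, f (q.1 - q.2)⟫ ∂ν) = -∫ q, ⟪q.1, f (q.1 - q.2)⟫ ∂ν := by
    have h := integral_prod_swap (μ := μ) (ν := μ) (fun q : E × E => ⟪q.1, f (q.1 - q.2)⟫)
    rw [show (fun z : E × E => ⟪z.swap.1, f (z.swap.1 - z.swap.2)⟫) = _ from hswapeq] at h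
    rw [integral_neg] at h
    linarith [h]
  -- combined integrand on the product
  set Φ : EuclideanSpace ℝ (Fin d) × EuclideanSpace ℝ (Fin d) → ℝ :=
    fun q => ⟪q.1, f (q.1 - q.2)⟫ + (m - 1) * ‖fσ (q.1 - q.2)‖ ^ 2 with hΦ
  have hΦint : Integrable Φ ν := hintF.add (hintG.const_mul (m - 1))
  have hρint : Integrable (fun x => ∫ y, Φ (x, y) ∂μ) μ := hΦint.integral_prod_left
  -- strong measurability of the convolutions
  have hsm1 : StronglyMeasurable (fun x : E => ∫ y, f (x - y) ∂μ) :=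
    hmf.stronglyMeasurable.integral_prod_right'
  have hsm2 : StronglyMeasurable (fun x : E => ∫ y, fσ (x - y) ∂μ) :=
    hmfσ.stronglyMeasurable.integral_prod_right'
  have hψm : Measurable (fun x : E =>
      ⟪x, ∫ y, f (x - y) ∂μ⟫ + (m - 1) * ‖∫ y, fσ (x - y) ∂μ‖ ^ 2) :=
    (measurable_id.inner hsm1.measurable).add
      (((hsm2.measurable.norm).pow_const 2).const_mul (m - 1))
  -- majorant for integrability of the left-hand side
  have hHprod : Integrable
      (fun q : EuclideanSpace ℝ (Fin d) × EuclideanSpace ℝ (Fin d) =>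
        ‖q.1‖ * ‖f (q.1 - q.2)‖ + (m - 1) * ‖fσ (q.1 - q.2)‖ ^ 2) ν :=
    hintFn.add (hintG.const_mul (m - 1))
  have hmslice : ∀ x : E, Measurable (fun y : E => f (x - y)) := fun x =>
    hfm.comp (measurable_const.sub measurable_id)
  have hmslice2 : ∀ x : E, Measurable (fun y : E => fσ (x - y)) := fun x =>
    hfσm.comp (measurable_const.sub measurable_id)
  -- Jensen ingredient, available for a.e. x
  have hjensen : ∀ x : E, Integrable (fun y => ‖fσ (x - y)‖ ^ 2) μ →
      ‖∫ y, fσ (x - y) ∂μ‖ ^ 2 ≤ ∫ y, ‖fσ (x - y)‖ ^ 2 ∂μ := by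
    intro x hb
    have hfσnorm_int : Integrable (fun y => ‖fσ (x - y)‖) μ := by
      refine (hb.add (integrable_const 1)).mono'
        ((hmslice2 x).norm.aestronglyMeasurable) ?_
      filter_upwards with y
      simp only [Pi.add_apply]
      rw [Real.norm_of_nonneg (norm_nonneg _)]
      nlinarith [sq_nonneg (‖fσ (x - y)‖ - 1), sq_nonneg (‖fσ (x - y)‖)]
    have h1 : ‖∫ y, fσ (x - y) ∂μ‖ ≤ ∫ y, ‖fσ (x - y)‖ ∂μ :=
      norm_integral_le_integral_norm _
    have h2 := sq_integral_le_aux hfσnorm_int hb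
    have h3 : (0:ℝ) ≤ ∫ y, ‖fσ (x - y)‖ ∂μ :=
      integral_nonneg (f := fun y => ‖fσ (x - y)‖) fun y => norm_nonneg _
    nlinarith [norm_nonneg (∫ y, fσ (x - y) ∂μ)]
  -- integrability of the left-hand side integrand
  have hψint : Integrable (fun x : E =>
      ⟪x, ∫ y, f (x - y) ∂μ⟫ + (m - 1) * ‖∫ y, fσ (x - y) ∂μ‖ ^ 2) μ := by
    refine hHprod.integral_prod_left.mono' hψm.aestronglyMeasurable ?_
    filter_upwards [hintFn.prod_right_ae, hintG.prod_right_ae] with x ha hb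
    have hj := hjensen x hb
    have hinner : |⟪x, ∫ y, f (x - y) ∂μ⟫| ≤ ∫ y, ‖x‖ * ‖f (x - y)‖ ∂μ := by
      calc |⟪x, ∫ y, f (x - y) ∂μ⟫| ≤ ‖x‖ * ‖∫ y, f (x - y) ∂μ‖ := abs_real_inner_le_norm _ _
        _ ≤ ‖x‖ * ∫ y, ‖f (x - y)‖ ∂μ := by
            exact mul_le_mul_of_nonneg_left (norm_integral_le_integral_norm _) (norm_nonneg x)
        _ = ∫ y, ‖x‖ * ‖f (x - y)‖ ∂μ := (integral_const_mul _ _).symm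
    have hHx : (∫ y, (‖x‖ * ‖f (x - y)‖ + (m - 1) * ‖fσ (x - y)‖ ^ 2) ∂μ)
        = (∫ y, ‖x‖ * ‖f (x - y)‖ ∂μ) + (m - 1) * ∫ y, ‖fσ (x - y)‖ ^ 2 ∂μ := by
      rw [integral_add ha (hb.const_mul _)]
      simp only [integral_const_mul]; rfl
    rw [Real.norm_eq_abs, hHx]
    have habs := abs_add_le (⟪x, ∫ y, f (x - y) ∂μ⟫)
      ((m - 1) * ‖∫ y, fσ (x - y) ∂μ‖ ^ 2)
    have habs2 : |(m - 1) * ‖∫ y, fσ (x - y) ∂μ‖ ^ 2|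
        = (m - 1) * ‖∫ y, fσ (x - y) ∂μ‖ ^ 2 :=
      abs_of_nonneg (mul_nonneg hm1.le (sq_nonneg _))
    have hj2 : (m - 1) * ‖∫ y, fσ (x - y) ∂μ‖ ^ 2
        ≤ (m - 1) * ∫ y, ‖fσ (x - y)‖ ^ 2 ∂μ :=
      mul_le_mul_of_nonneg_left hj hm1.le
    linarith
  -- pointwise a.e. comparison with the iterated integral
  have hkey : ∀ᵐ x ∂μ,
      ⟪x, ∫ y, f (x - y) ∂μ⟫ + (m - 1) * ‖∫ y, fσ (x - y) ∂μ‖ ^ 2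
        ≤ ∫ y, Φ (x, y) ∂μ := by
    filter_upwards [hintFn.prod_right_ae, hintG.prod_right_ae] with x ha hb
    have hj := hjensen x hb
    have hin : Integrable (fun y => ⟪x, f (x - y)⟫) μ := by
      refine ha.mono' ((measurable_const.inner (hmslice x)).aestronglyMeasurable) ?_
      filter_upwards with y
      exact abs_real_inner_le_norm _ _
    have hinteq : ∫ y, Φ (x, y) ∂μ
        = (∫ y, ⟪x, f (x - y)⟫ ∂μ) + (m - 1) * ∫ y, ‖fσ (x - y)‖ ^ 2 ∂μ := by
      rw [hΦ]
      rw [integral_add hin (hb.const_mul _)]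
      simp only [integral_const_mul]
    rw [hinteq]
    have hj2 : (m - 1) * ‖∫ y, fσ (x - y) ∂μ‖ ^ 2
        ≤ (m - 1) * ∫ y, ‖fσ (x - y)‖ ^ 2 ∂μ :=
      mul_le_mul_of_nonneg_left hj hm1.le
    by_cases hx : x = 0
    · subst hx
      simp only [inner_zero_left, integral_zero]
      linarith
    · have hxn : ‖x‖ ≠ 0 := norm_ne_zero_iff.mpr hx
      have hfn : Integrable (fun y => ‖f (x - y)‖) μ := by
        have h := ha.const_mul (‖x‖⁻¹)
        refine h.congr (Filter.Eventually.of_forall fun y => ?_)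
        field_simp
      have hfint : Integrable (fun y => f (x - y)) μ :=
        (integrable_norm_iff (hmslice x).aestronglyMeasurable).mp hfn
      have heq : ⟪x, ∫ y, f (x - y) ∂μ⟫ = ∫ y, ⟪x, f (x - y)⟫ ∂μ :=
        (integral_inner hfint x).symm
      rw [heq]
      linarith
  -- the iterated integral equals the product integral
  have hiter : ∫ x, ∫ y, Φ (x, y) ∂μ ∂μ = ∫ q, Φ q ∂ν := (integral_prod Φ hΦint).symm
  -- symmetrization: C = 2A
  have hC : ∫ q, ⟪q.1 - q.2, f (q.1 - q.2)⟫ ∂ν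
      = 2 * ∫ q, ⟪q.1, f (q.1 - q.2)⟫ ∂ν := by
    have hptw : (fun q : EuclideanSpace ℝ (Fin d) × EuclideanSpace ℝ (Fin d) =>
        ⟪q.1 - q.2, f (q.1 - q.2)⟫)
        = fun q => ⟪q.1, f (q.1 - q.2)⟫ - ⟪q.2, f (q.1 - q.2)⟫ := by
      funext q; rw [inner_sub_left]
    rw [hptw, integral_sub hintF hintF2, hA2]; ring
  -- integrability for the final comparison
  have hintC : Integrable (fun q : EuclideanSpace ℝ (Fin d) × EuclideanSpace ℝ (Fin d) =>
      ⟪q.1 - q.2, f (q.1 - q.2)⟫ + 2 * (m - 1) * ‖fσ (q.1 - q.2)‖ ^ 2) ν := by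
    refine ((hintF.sub hintF2).add (hintG.const_mul (2 * (m - 1)))).congr
      (Filter.Eventually.of_forall fun q => ?_)
    simp only [Pi.sub_apply, Pi.add_apply]
    rw [inner_sub_left]
  have hnormid : Integrable (fun x : E => ‖x‖) μ := by
    refine (hμ2.add (integrable_const 1)).mono' measurable_norm.aestronglyMeasurable ?_
    filter_upwards with x
    simp only [Pi.add_apply, norm_norm]
    nlinarith [sq_nonneg (‖x‖ - 1), sq_nonneg ‖x‖, Real.norm_of_nonneg (norm_nonneg x)]
  have hid : Integrable (fun x : E => x) μ :=
    (integrable_norm_iff measurable_id.aestronglyMeasurable).mp hnormid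
  have hsq1 : Integrable (fun q : EuclideanSpace ℝ (Fin d) × EuclideanSpace ℝ (Fin d) =>
      ‖q.1‖ ^ 2) ν := by
    simpa only [mul_one] using hμ2.mul_prod (integrable_const (1 : ℝ))
  have hsq2 : Integrable (fun q : EuclideanSpace ℝ (Fin d) × EuclideanSpace ℝ (Fin d) =>
      ‖q.2‖ ^ 2) ν := by
    simpa only [one_mul] using (integrable_const (1 : ℝ)).mul_prod hμ2
  have hinner12 : Integrable (fun q : EuclideanSpace ℝ (Fin d) × EuclideanSpace ℝ (Fin d) =>
      ⟪q.1, q.2⟫) ν := by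
    refine (hnormid.mul_prod hnormid).mono'
      (measurable_fst.inner measurable_snd).aestronglyMeasurable ?_
    filter_upwards with q
    exact abs_real_inner_le_norm _ _
  have hsubsq : Integrable (fun q : EuclideanSpace ℝ (Fin d) × EuclideanSpace ℝ (Fin d) =>
      ‖q.1 - q.2‖ ^ 2) ν := by
    refine ((hsq1.sub (hinner12.const_mul 2)).add hsq2).congr
      (Filter.Eventually.of_forall fun q => ?_)
    simp only [Pi.sub_apply, Pi.add_apply]
    exact (norm_sub_sq_real _ _).symm
  -- the main pointwise estimate from hmono
  have hptw : ∀ q : EuclideanSpace ℝ (Fin d) × EuclideanSpace ℝ (Fin d),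
      ⟪q.1 - q.2, f (q.1 - q.2)⟫ + 2 * (m - 1) * ‖fσ (q.1 - q.2)‖ ^ 2
        ≤ L * ‖q.1 - q.2‖ ^ 2 := by
    intro q
    have h := hmono (q.1 - q.2) 0
    simpa [hf0, hfσ0] using h
  have hineq := integral_mono hintC (hsubsq.const_mul L) hptw
  -- compute the integrals
  have hL1 : ∫ q, (⟪q.1 - q.2, f (q.1 - q.2)⟫ + 2 * (m - 1) * ‖fσ (q.1 - q.2)‖ ^ 2) ∂ν
      = (∫ q, ⟪q.1 - q.2, f (q.1 - q.2)⟫ ∂ν)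
        + 2 * (m - 1) * ∫ q, ‖fσ (q.1 - q.2)‖ ^ 2 ∂ν := by
    have hCι : Integrable (fun q : EuclideanSpace ℝ (Fin d) × EuclideanSpace ℝ (Fin d) =>
        ⟪q.1 - q.2, f (q.1 - q.2)⟫) ν := by
      refine (hintF.sub hintF2).congr (Filter.Eventually.of_forall fun q => ?_)
      simp only [Pi.sub_apply]
      rw [inner_sub_left]
    rw [integral_add hCι (hintG.const_mul (2 * (m - 1))), integral_const_mul]
  have hL2 : ∫ q, L * ‖q.1 - q.2‖ ^ 2 ∂ν = L * ∫ q, ‖q.1 - q.2‖ ^ 2 ∂ν :=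
    integral_const_mul _ _
  -- variance identity
  have h1 : ∫ q, ‖q.1‖ ^ 2 ∂ν = ∫ x, ‖x‖ ^ 2 ∂μ := by
    rw [hν, integral_prod _ (hν ▸ hsq1)]
    refine integral_congr_ae (Filter.Eventually.of_forall fun x => ?_)
    show (∫ _y, ‖x‖ ^ 2 ∂μ) = ‖x‖ ^ 2
    rw [integral_const]
    simp
  have h2 : ∫ q, ‖q.2‖ ^ 2 ∂ν = ∫ x, ‖x‖ ^ 2 ∂μ := by
    rw [hν, integral_prod _ (hν ▸ hsq2)]
    show (∫ _x, (∫ y, ‖y‖ ^ 2 ∂μ) ∂μ) = ∫ x, ‖x‖ ^ 2 ∂μ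
    rw [integral_const]
    simp
  have h3 : ∫ q, ⟪q.1, q.2⟫ ∂ν = ‖∫ x, x ∂μ‖ ^ 2 := by
    rw [hν, integral_prod _ (hν ▸ hinner12)]
    have e1 : ∀ x : E, ∫ y, ⟪x, y⟫ ∂μ = ⟪x, ∫ y, (y : E) ∂μ⟫ := fun x => integral_inner hid x
    rw [integral_congr_ae (Filter.Eventually.of_forall e1)]
    have e2 : ∀ x : E, ⟪x, ∫ y, (y : E) ∂μ⟫ = ⟪(∫ y, (y : E) ∂μ), x⟫ := fun x =>
      real_inner_comm _ _
    rw [integral_congr_ae (Filter.Eventually.of_forall e2), integral_inner hid,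
      real_inner_self_eq_norm_sq]
  have hvar : ∫ q, ‖q.1 - q.2‖ ^ 2 ∂ν
      = 2 * (∫ x, ‖x‖ ^ 2 ∂μ) - 2 * ‖∫ x, x ∂μ‖ ^ 2 := by
    have hexp : ∫ q, ‖q.1 - q.2‖ ^ 2 ∂ν
        = (∫ q, ‖q.1‖ ^ 2 ∂ν) - 2 * (∫ q, ⟪q.1, q.2⟫ ∂ν) + ∫ q, ‖q.2‖ ^ 2 ∂ν := by
      rw [integral_congr_ae (Filter.Eventually.of_forall
        (fun q : EuclideanSpace ℝ (Fin d) × EuclideanSpace ℝ (Fin d) =>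
          norm_sub_sq_real q.1 q.2))]
      have hι : Integrable (fun q : EuclideanSpace ℝ (Fin d) × EuclideanSpace ℝ (Fin d) =>
          ‖q.1‖ ^ 2 - 2 * ⟪q.1, q.2⟫) ν := hsq1.sub (hinner12.const_mul 2)
      rw [integral_add hι hsq2, integral_sub hsq1 (hinner12.const_mul 2), integral_const_mul]
    rw [hexp, h1, h2, h3]
    ring
  -- split the product integral of Φ
  have hΦsplit : ∫ q, Φ q ∂ν
      = (∫ q, ⟪q.1, f (q.1 - q.2)⟫ ∂ν) + (m - 1) * ∫ q, ‖fσ (q.1 - q.2)‖ ^ 2 ∂ν := by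
    rw [hΦ, integral_add hintF (hintG.const_mul (m - 1)), integral_const_mul]
  -- put everything together
  calc ∫ x, (⟪x, ∫ y, f (x - y) ∂μ⟫ + (m - 1) * ‖∫ y, fσ (x - y) ∂μ‖ ^ 2) ∂μ
      ≤ ∫ x, ∫ y, Φ (x, y) ∂μ ∂μ := integral_mono_ae hψint hρint hkey
    _ = ∫ q, Φ q ∂ν := hiter
    _ ≤ L * ((∫ x, ‖x‖ ^ 2 ∂μ) - ‖∫ x, x ∂μ‖ ^ 2) := by
        rw [hΦsplit]
        rw [hL1, hL2, hvar, hC] at hineq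
        linarith
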